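/- arXiv:2409.11268 — 6 statements merged into one kernel-verified Lean document; each statement's English description precedes it below -/
import Mathlib

section
/- For every k ≥ 0 and n ≥ 0, the total number of parts equal to 2^k in the image set ImB_2(n), namely Σ_{λ ∈ B(n), ℓ(λ)≥2} m_{2^k}(pre_2(λ)), equals Σ_{λ ∈ B(n)} ( Σ_{0 ≤ i < k/2} m_{2^i}(λ)·m_{2^{k-i}}(λ) + [k even]·C(m_{2^{k/2}}(λ), 2) ), i.e., it equals the number of binary partitions of n with two rooted parts 2^i and 2^{k-i}, summed over 0 ≤ i ≤ ⌊k/2⌋. -/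
/-- `pre2 s` is the multiset of all pairwise products of two distinct entries
(by position) of the multiset `s`, i.e. the summands of `e₂` evaluated at `s`. -/
def pre2 (s : Multiset ℕ) : Multiset ℕ := (Multiset.powersetCard 2 s).map Multiset.prod

lemma pre2_cons (a : ℕ) (s : Multiset ℕ) :
    pre2 (a ::ₘ s) = pre2 s + s.map (a * ·) := by
  unfold pre2
  rw [show (2:ℕ) = 1 + 1 from rfl, Multiset.powersetCard_cons, Multiset.map_add,
    Multiset.powersetCard_one, Multiset.map_map, Multiset.map_map]
  congr 1
  apply Multiset.map_congr rfl
  intro x _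
  simp [Multiset.prod_cons]

lemma pow_inj {i j : ℕ} : (2:ℕ)^i = 2^j ↔ i = j :=
  ⟨fun h => Nat.pow_right_injective (le_refl 2) h, fun h => by rw [h]⟩

lemma count_map_mul (j k : ℕ) (s : Multiset ℕ) (hs : ∀ p ∈ s, ∃ i : ℕ, p = 2 ^ i) :
    (s.map ((2:ℕ)^j * ·)).count (2^k) = if j ≤ k then s.count (2^(k-j)) else 0 := by
  induction s using Multiset.induction with
  | empty => simp
  | cons a t ih =>
    obtain ⟨m, rfl⟩ := hs a (Multiset.mem_cons_self a t)
    have ht := fun p hp => hs p (Multiset.mem_cons_of_mem hp)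
    rw [Multiset.map_cons, Multiset.count_cons, Multiset.count_cons, ih ht]
    have h1 : ((2:ℕ)^k = 2^j * 2^m) ↔ (j ≤ k ∧ m = k - j) := by
      rw [eq_comm, ← pow_add, pow_inj]; omega
    by_cases hjk : j ≤ k
    · by_cases hm : m = k - j
      · have h2 : (2:ℕ)^k = 2^j * 2^m := h1.mpr ⟨hjk, hm⟩
        have h3 : (2:ℕ)^(k-j) = 2^m := by rw [hm]
        simp [hjk, h2, h3]
      · have hm' : ¬ (k - j = m) := fun h => hm h.symm
        have h2 : ¬ ((2:ℕ)^k = 2^j * 2^m) := by rw [h1]; tauto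
        simp [hjk, h2, hm']
    · simp [h1, hjk]

lemma count_pre2 (k : ℕ) (s : Multiset ℕ) (hs : ∀ p ∈ s, ∃ i : ℕ, p = 2 ^ i) :
    (pre2 s).count (2^k) =
      (∑ i ∈ Finset.range ((k+1)/2), s.count (2^i) * s.count (2^(k-i)))
      + if Even k then (s.count (2^(k/2))).choose 2 else 0 := by
  induction s using Multiset.induction with
  | empty => simp [pre2]
  | cons a t ih =>
    obtain ⟨j, rfl⟩ := hs a (Multiset.mem_cons_self a t)
    have ht := fun p hp => hs p (Multiset.mem_cons_of_mem hp)
    rw [pre2_cons, Multiset.count_add, ih ht, count_map_mul j k t ht]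
    have hcc : ∀ i : ℕ, (((2:ℕ)^j) ::ₘ t).count (2^i) = t.count (2^i) + if i = j then 1 else 0 := by
      intro i
      rw [Multiset.count_cons]
      congr 1
      simp [pow_inj, eq_comm]
    simp only [hcc]
    -- expand RHS sum
    have expand : ∑ i ∈ Finset.range ((k+1)/2),
        (t.count (2^i) + if i = j then 1 else 0) * (t.count (2^(k-i)) + if k - i = j then 1 else 0)
        = (∑ i ∈ Finset.range ((k+1)/2), t.count (2^i) * t.count (2^(k-i)))
          + (∑ i ∈ Finset.range ((k+1)/2), (if i = j then 1 else 0) * t.count (2^(k-i)))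
          + (∑ i ∈ Finset.range ((k+1)/2), t.count (2^i) * (if k - i = j then 1 else 0))
          + (∑ i ∈ Finset.range ((k+1)/2), (if i = j then 1 else 0) * (if k - i = j then 1 else 0)) := by
      rw [← Finset.sum_add_distrib, ← Finset.sum_add_distrib, ← Finset.sum_add_distrib]
      apply Finset.sum_congr rfl; intros; ring
    rw [expand]
    have hrange : ∀ i : ℕ, i ∈ Finset.range ((k+1)/2) ↔ 2*i < k := by
      intro i; rw [Finset.mem_range]; omega
    rcases lt_or_ge k j with h | h
    · -- k < j
      have hA : (∑ i ∈ Finset.range ((k+1)/2), (if i = j then 1 else 0) * t.count (2^(k-i))) = 0 :=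
        Finset.sum_eq_zero fun i hi => by
          have := (hrange i).mp hi
          have : i ≠ j := by omega
          simp [this]
      have hB : (∑ i ∈ Finset.range ((k+1)/2), t.count (2^i) * (if k - i = j then 1 else 0)) = 0 :=
        Finset.sum_eq_zero fun i hi => by
          have := (hrange i).mp hi
          have : k - i ≠ j := by omega
          simp [this]
      have hD : (∑ i ∈ Finset.range ((k+1)/2), (if i = j then 1 else 0) * (if k - i = j then 1 else 0)) = 0 :=
        Finset.sum_eq_zero fun i hi => by
          have := (hrange i).mp hi
          have : i ≠ j := by omega
          simp [this]
      have hne : k/2 ≠ j := by omega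
      have hjk : ¬ (j ≤ k) := by omega
      rw [hA, hB, hD]
      simp [hjk, hne]
    · rcases Nat.lt_trichotomy (2*j) k with h2 | h2 | h2
      · -- 2j < k
        have hA : (∑ i ∈ Finset.range ((k+1)/2), (if i = j then 1 else 0) * t.count (2^(k-i)))
            = t.count (2^(k-j)) := by
          rw [Finset.sum_eq_single_of_mem j (by rw [hrange]; omega)]
          · simp
          · intro b _ hb; simp [hb]
        have hB : (∑ i ∈ Finset.range ((k+1)/2), t.count (2^i) * (if k - i = j then 1 else 0)) = 0 :=
          Finset.sum_eq_zero fun i hi => by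
            have := (hrange i).mp hi
            have : k - i ≠ j := by omega
            simp [this]
        have hD : (∑ i ∈ Finset.range ((k+1)/2), (if i = j then 1 else 0) * (if k - i = j then 1 else 0)) = 0 :=
          Finset.sum_eq_zero fun i hi => by
            have := (hrange i).mp hi
            have : k - i ≠ j := by omega
            simp [this]
        rw [hA, hB, hD]
        rcases Nat.even_or_odd k with he | ho
        · have hne : k/2 ≠ j := by
            rcases he with ⟨m, hm⟩; omega
          simp [h, hne] <;> omega
        · have hne : ¬ Even k := by simpa using ho
          simp [h, hne] <;> omega
      · -- 2j = k
        have hev : Even k := ⟨j, by omega⟩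
        have hkj : k / 2 = j := by omega
        have hkjj : k - j = j := by omega
        have hA : (∑ i ∈ Finset.range ((k+1)/2), (if i = j then 1 else 0) * t.count (2^(k-i))) = 0 :=
          Finset.sum_eq_zero fun i hi => by
            have := (hrange i).mp hi
            have : i ≠ j := by omega
            simp [this]
        have hB : (∑ i ∈ Finset.range ((k+1)/2), t.count (2^i) * (if k - i = j then 1 else 0)) = 0 :=
          Finset.sum_eq_zero fun i hi => by
            have := (hrange i).mp hi
            have : k - i ≠ j := by omega
            simp [this]
        have hD : (∑ i ∈ Finset.range ((k+1)/2), (if i = j then 1 else 0) * (if k - i = j then 1 else 0)) = 0 :=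
          Finset.sum_eq_zero fun i hi => by
            have := (hrange i).mp hi
            have : i ≠ j := by omega
            simp [this]
        have hch : (t.count (2^j) + 1).choose 2 = (t.count (2^j)).choose 2 + t.count (2^j) := by
          rw [Nat.choose_succ_succ]
          simp [Nat.choose_one_right, Nat.add_comm]
        rw [hA, hB, hD, hkj, hkjj]
        simp [hev, h, hch] <;> omega
      · -- k < 2j ≤ 2k
        have hA : (∑ i ∈ Finset.range ((k+1)/2), (if i = j then 1 else 0) * t.count (2^(k-i))) = 0 :=
          Finset.sum_eq_zero fun i hi => by
            have := (hrange i).mp hi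
            have : i ≠ j := by omega
            simp [this]
        have hB : (∑ i ∈ Finset.range ((k+1)/2), t.count (2^i) * (if k - i = j then 1 else 0))
            = t.count (2^(k-j)) := by
          rw [Finset.sum_eq_single_of_mem (k-j) (by rw [hrange]; omega)]
          · have hkk : k - (k - j) = j := by omega
            simp [hkk]
          · intro b hb hbne
            have := (hrange b).mp hb
            have : k - b ≠ j := by omega
            simp [this]
        have hD : (∑ i ∈ Finset.range ((k+1)/2), (if i = j then 1 else 0) * (if k - i = j then 1 else 0)) = 0 :=
          Finset.sum_eq_zero fun i hi => by
            have := (hrange i).mp hi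
            have : i ≠ j := by omega
            simp [this]
        rw [hA, hB, hD]
        rcases Nat.even_or_odd k with he | ho
        · have hne : k/2 ≠ j := by
            rcases he with ⟨m, hm⟩; omega
          simp [h, hne] <;> omega
        · have hne : ¬ Even k := by simpa using ho
          simp [h, hne] <;> omega

open Classical in
/-- The finset of binary partitions of `n`: partitions all of whose parts are powers of 2. -/
noncomputable def binaryPartitions (n : ℕ) : Finset (Nat.Partition n) :=
  Finset.univ.filter fun l => ∀ p ∈ l.parts, ∃ i : ℕ, p = 2 ^ i

theorem stmt_1 (k n : ℕ) :
    (∑ l ∈ (binaryPartitions n).filter (fun l => 2 ≤ Multiset.card l.parts),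
        (pre2 l.parts).count (2 ^ k)) =
      ∑ l ∈ binaryPartitions n,
        ((∑ i ∈ Finset.range ((k + 1) / 2),
            l.parts.count (2 ^ i) * l.parts.count (2 ^ (k - i)))
          + if Even k then Nat.choose (l.parts.count (2 ^ (k / 2))) 2 else 0) := by
  rw [Finset.sum_filter_of_ne]
  · apply Finset.sum_congr rfl
    intro l hl
    have hs : ∀ p ∈ l.parts, ∃ i : ℕ, p = 2 ^ i := by
      simp only [binaryPartitions, Finset.mem_filter] at hl
      exact hl.2
    exact count_pre2 k l.parts hs
  · intro l _ hne
    by_contra hcard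
    apply hne
    have h0 : Multiset.powersetCard 2 l.parts = 0 :=
      Multiset.powersetCard_eq_empty 2 (by omega)
    simp [pre2, h0]
end

section
/- For all n ≥ 0, a_n = Σ_{i ≥ 1} (i-1)·|B(n-i)|, where the sum is over all integers i with 1 ≤ i ≤ n. -/
/-- `a n = m₁(ImB₂(n))`: the total number of parts equal to 1 in the image of `pre2`
on binary partitions of `n` with at least two parts; by injectivity this equals
`∑_{λ ∈ B(n)} C(m₁(λ), 2)`. -/
noncomputable def a (n : ℕ) : ℕ :=
  ∑ l ∈ binaryPartitions n, Nat.choose (l.parts.count 1) 2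

lemma sum_Icc_pred (m : ℕ) : ∑ i ∈ Finset.Icc 1 m, (i - 1) = m.choose 2 := by
  induction m with
  | zero => simp
  | succ m ih =>
    rw [Finset.sum_Icc_succ_top (by omega), ih]
    have : (m + 1).choose 2 = m.choose 1 + m.choose 2 := Nat.choose_succ_succ m 1
    simp [this, Nat.choose_one_right]
    omega

lemma choose_eq_sum (n m : ℕ) (h : m ≤ n) :
    m.choose 2 = ∑ i ∈ Finset.Icc 1 n, (i - 1) * (if i ≤ m then 1 else 0) := by
  simp_rw [mul_ite, mul_one, mul_zero]
  rw [← Finset.sum_filter]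
  have : (Finset.Icc 1 n).filter (· ≤ m) = Finset.Icc 1 m := by
    ext x
    simp only [Finset.mem_filter, Finset.mem_Icc]
    omega
  rw [this, sum_Icc_pred]

lemma mem_binaryPartitions {n : ℕ} (l : Nat.Partition n) :
    l ∈ binaryPartitions n ↔ ∀ p ∈ l.parts, ∃ i : ℕ, p = 2 ^ i := by
  simp [binaryPartitions]

def subOnes {n i : ℕ} (l : Nat.Partition n) (h : i ≤ l.parts.count 1) :
    Nat.Partition (n - i) where
  parts := l.parts - Multiset.replicate i 1
  parts_pos hp := l.parts_pos (Multiset.mem_of_le (Multiset.sub_le_self _ _) hp)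
  parts_sum := by
    have hle : Multiset.replicate i 1 ≤ l.parts :=
      Multiset.le_count_iff_replicate_le.mp h
    have h2 : (l.parts - Multiset.replicate i 1).sum + (Multiset.replicate i 1).sum = n := by
      rw [← Multiset.sum_add, tsub_add_cancel_of_le hle, l.parts_sum]
    rw [Multiset.sum_replicate, smul_eq_mul, mul_one] at h2
    omega

def addOnes {n i : ℕ} (h : i ≤ n) (m : Nat.Partition (n - i)) : Nat.Partition n where
  parts := Multiset.replicate i 1 + m.parts
  parts_pos hp := by
    rcases Multiset.mem_add.mp hp with hp | hp
    · simp [Multiset.eq_of_mem_replicate hp]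
    · exact m.parts_pos hp
  parts_sum := by
    rw [Multiset.sum_add, Multiset.sum_replicate, smul_eq_mul, mul_one, m.parts_sum]
    omega

lemma card_filter_count (n i : ℕ) (h2 : i ≤ n) :
    ((binaryPartitions n).filter fun l => i ≤ l.parts.count 1).card
      = (binaryPartitions (n - i)).card := by
  refine Finset.card_bij'
    (fun l hl => subOnes l (Finset.mem_filter.mp hl).2)
    (fun m _ => addOnes h2 m) ?_ ?_ ?_ ?_
  · intro l hl
    rw [mem_binaryPartitions]
    intro p hp
    exact (mem_binaryPartitions l).mp (Finset.mem_filter.mp hl).1 p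
      (Multiset.mem_of_le (Multiset.sub_le_self _ _) hp)
  · intro m hm
    rw [Finset.mem_filter]
    refine ⟨?_, ?_⟩
    · rw [mem_binaryPartitions]
      intro p hp
      rcases Multiset.mem_add.mp hp with hp | hp
      · exact ⟨0, by simpa using Multiset.eq_of_mem_replicate hp⟩
      · exact (mem_binaryPartitions m).mp hm p hp
    · show i ≤ Multiset.count 1 (Multiset.replicate i 1 + m.parts)
      rw [Multiset.count_add, Multiset.count_replicate_self]
      omega
  · intro l hl
    have hle : Multiset.replicate i 1 ≤ l.parts :=
      Multiset.le_count_iff_replicate_le.mp (Finset.mem_filter.mp hl).2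
    apply Nat.Partition.ext
    show Multiset.replicate i 1 + (l.parts - Multiset.replicate i 1) = l.parts
    rw [add_comm]
    exact tsub_add_cancel_of_le hle
  · intro m hm
    apply Nat.Partition.ext
    show Multiset.replicate i 1 + m.parts - Multiset.replicate i 1 = m.parts
    exact add_tsub_cancel_left _ _

theorem stmt_2 (n : ℕ) :
    a n = ∑ i ∈ Finset.Icc 1 n, (i - 1) * (binaryPartitions (n - i)).card := by
  have hcount : ∀ l ∈ binaryPartitions n, l.parts.count 1 ≤ n := by
    intro l _
    have hle : Multiset.replicate (l.parts.count 1) 1 ≤ l.parts :=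
      Multiset.le_count_iff_replicate_le.mp le_rfl
    have h := tsub_add_cancel_of_le hle
    have h2 : (l.parts - Multiset.replicate (l.parts.count 1) 1).sum
        + (Multiset.replicate (l.parts.count 1) 1).sum = n := by
      rw [← Multiset.sum_add, h, l.parts_sum]
    rw [Multiset.sum_replicate, smul_eq_mul, mul_one] at h2
    omega
  unfold a
  calc ∑ l ∈ binaryPartitions n, Nat.choose (l.parts.count 1) 2
      = ∑ l ∈ binaryPartitions n, ∑ i ∈ Finset.Icc 1 n,
          (i - 1) * (if i ≤ l.parts.count 1 then 1 else 0) :=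
        Finset.sum_congr rfl fun l hl => choose_eq_sum n _ (hcount l hl)
    _ = ∑ i ∈ Finset.Icc 1 n, ∑ l ∈ binaryPartitions n,
          (i - 1) * (if i ≤ l.parts.count 1 then 1 else 0) := Finset.sum_comm
    _ = ∑ i ∈ Finset.Icc 1 n, (i - 1)
          * ((binaryPartitions n).filter fun l => i ≤ l.parts.count 1).card := by
        refine Finset.sum_congr rfl fun i _ => ?_
        rw [← Finset.mul_sum, Finset.card_filter]
    _ = ∑ i ∈ Finset.Icc 1 n, (i - 1) * (binaryPartitions (n - i)).card := by
        refine Finset.sum_congr rfl fun i hi => ?_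
        rw [card_filter_count n i (Finset.mem_Icc.mp hi).2]
end

section
/- For all n ≥ 0, as an identity of integers, (n-2)·a_n = Σ_{k=1}^{n} (β(k) + 2)·a_{n-k}, where β(k) = Σ_{2^i | k} 2^i is the sum of the divisors of k that are powers of 2. -/
open Classical in
/-- `beta k` is the sum of the divisors of `k` that are powers of 2. -/
noncomputable def beta (k : ℕ) : ℕ :=
  ∑ d ∈ (Nat.divisors k).filter (fun d => ∃ i : ℕ, d = 2 ^ i), d

open Finset

lemma mem_bp {n : ℕ} {l : Nat.Partition n} :
    l ∈ binaryPartitions n ↔ ∀ p ∈ l.parts, ∃ i : ℕ, p = 2 ^ i := by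
  classical
  simp [binaryPartitions]

lemma msum_le {s t : Multiset ℕ} (h : s ≤ t) : s.sum ≤ t.sum := by
  obtain ⟨u, rfl⟩ := Multiset.le_iff_exists_add.mp h
  simp

lemma mcard_le_sum {s : Multiset ℕ} (h : ∀ p ∈ s, 0 < p) : Multiset.card s ≤ s.sum := by
  have := Multiset.sum_map_le_sum (fun _ => 1) (fun x hx => h x hx)
  simpa using this

lemma count_mul_le_sum (s : Multiset ℕ) (q : ℕ) : s.count q * q ≤ s.sum := by
  have h : Multiset.replicate (s.count q) q ≤ s :=
    Multiset.le_count_iff_replicate_le.mp le_rfl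
  have := msum_le h
  simpa [Multiset.sum_replicate, mul_comm] using this

lemma a_zero : a 0 = 0 := by
  apply Finset.sum_eq_zero
  intro l _
  have h0 : l.parts.count 1 ≤ Multiset.card l.parts := Multiset.count_le_card _ _
  have h1 : Multiset.card l.parts ≤ l.parts.sum := mcard_le_sum (fun p hp => l.parts_pos hp)
  have : l.parts.count 1 = 0 := by
    have := l.parts_sum
    omega
  simp [this]

/-- The removal lemma. -/
lemma rem (w : ℕ → ℕ) (q j n : ℕ) (hq : ∃ i : ℕ, q = 2 ^ i) (hle : j * q ≤ n) :
    ∑ l ∈ (binaryPartitions n).filter (fun l => j ≤ l.parts.count q),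
      w (l.parts.count 1) =
    ∑ m ∈ binaryPartitions (n - j * q),
      w (m.parts.count 1 + if q = 1 then j else 0) := by
  have hqpos : 0 < q := by obtain ⟨i, rfl⟩ := hq; positivity
  refine Finset.sum_bij'
    (fun l hl => ⟨l.parts - Multiset.replicate j q, ?_, ?_⟩)
    (fun m hm => ⟨m.parts + Multiset.replicate j q, ?_, ?_⟩)
    ?_ ?_ ?_ ?_ ?_
  · -- pos for forward
    intro p hp
    exact l.parts_pos (Multiset.mem_of_le (tsub_le_self) hp)
  · -- sum for forward
    have hl' := Finset.mem_filter.mp hl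
    have hrep : Multiset.replicate j q ≤ l.parts :=
      Multiset.le_count_iff_replicate_le.mp hl'.2
    have h1 : l.parts - Multiset.replicate j q + Multiset.replicate j q = l.parts :=
      tsub_add_cancel_of_le hrep
    have h2 := congrArg Multiset.sum h1
    rw [Multiset.sum_add, Multiset.sum_replicate, smul_eq_mul, l.parts_sum] at h2
    omega
  · -- pos for backward
    intro p hp
    rcases Multiset.mem_add.mp hp with h | h
    · exact m.parts_pos h
    · rw [Multiset.eq_of_mem_replicate h]; exact hqpos
  · -- sum for backward
    rw [Multiset.sum_add, Multiset.sum_replicate, smul_eq_mul, m.parts_sum]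
    omega
  · -- forward mem
    intro l hl
    have hl' := Finset.mem_filter.mp hl
    rw [mem_bp] at hl' ⊢
    intro p hp
    exact hl'.1 p (Multiset.mem_of_le (tsub_le_self) hp)
  · -- backward mem
    intro m hm
    rw [mem_bp] at hm
    rw [Finset.mem_filter, mem_bp]
    constructor
    · intro p hp
      rcases Multiset.mem_add.mp hp with h | h
      · exact hm p h
      · rw [Multiset.eq_of_mem_replicate h]; exact hq
    · simp [Multiset.count_replicate]
  · -- left inverse
    intro l hl
    have hl' := Finset.mem_filter.mp hl
    have hrep : Multiset.replicate j q ≤ l.parts :=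
      Multiset.le_count_iff_replicate_le.mp hl'.2
    exact Nat.Partition.ext (tsub_add_cancel_of_le hrep)
  · -- right inverse
    intro m hm
    exact Nat.Partition.ext (add_tsub_cancel_right _ _)
  · -- values
    intro l hl
    have hl' := Finset.mem_filter.mp hl
    congr 1
    rw [Multiset.count_sub, Multiset.count_replicate]
    by_cases hq1 : q = 1
    · subst hq1
      have h2 : j ≤ l.parts.count 1 := hl'.2
      split_ifs <;> omega
    · split_ifs <;> omega

lemma key1 (n i j : ℕ) (hi : 1 ≤ i) (hj : 1 ≤ j) :
    ∑ l ∈ (binaryPartitions n).filter (fun l => j ≤ l.parts.count (2 ^ i)),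
      (l.parts.count 1).choose 2 = a (n - j * 2 ^ i) := by
  by_cases hle : j * 2 ^ i ≤ n
  · have h := rem (fun m => m.choose 2) (2 ^ i) j n ⟨i, rfl⟩ hle
    have h1 : (2 : ℕ) ^ i ≠ 1 := by
      have : (2:ℕ)^1 ≤ 2^i := Nat.pow_le_pow_right (by norm_num) hi
      omega
    simp only [if_neg h1, add_zero] at h
    exact h
  · have hemp : (binaryPartitions n).filter (fun l => j ≤ l.parts.count (2 ^ i)) = ∅ := by
      apply Finset.filter_false_of_mem
      intro l _ hcount
      have h2 := count_mul_le_sum l.parts (2 ^ i)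
      rw [l.parts_sum] at h2
      have h3 : j * 2 ^ i ≤ l.parts.count (2 ^ i) * 2 ^ i := Nat.mul_le_mul_right _ hcount
      omega
    rw [hemp, Finset.sum_empty]
    have : n - j * 2 ^ i = 0 := by omega
    rw [this, a_zero]

lemma key0 (n j : ℕ) (hj1 : 1 ≤ j) (hjn : j ≤ n) :
    ∑ l ∈ (binaryPartitions n).filter (fun l => j ≤ l.parts.count 1),
      ((l.parts.count 1) - j).choose 2 = a (n - j) := by
  have h := rem (fun m => (m - j).choose 2) 1 j n ⟨0, by norm_num⟩ (by omega)
  simp only [if_pos rfl, if_true, Nat.add_sub_cancel] at h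
  have e : n - j * 1 = n - j := by omega
  rw [e] at h
  unfold a
  exact h

lemma choose_id (m : ℕ) : m * m.choose 2 = 3 * m.choose 3 + 2 * m.choose 2 := by
  rcases Nat.lt_or_ge m 2 with h | h
  · interval_cases m <;> simp [Nat.choose]
  · have h3 : m.choose 3 * 3 = m.choose 2 * (m - 2) := Nat.choose_succ_right_eq m 2
    calc m * m.choose 2 = m.choose 2 * (m - 2) + 2 * m.choose 2 := by
          have : m - 2 + 2 = m := Nat.sub_add_cancel h
          nlinarith [this]
      _ = 3 * m.choose 3 + 2 * m.choose 2 := by rw [← h3]; ring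

lemma sum_range_choose2 (m : ℕ) : ∑ t ∈ Finset.range m, t.choose 2 = m.choose 3 := by
  induction m with
  | zero => simp
  | succ m ih =>
    rw [Finset.sum_range_succ, ih]
    have h : (m+1).choose 3 = m.choose 2 + m.choose 3 := Nat.choose_succ_succ m 2
    omega

lemma hockey (n m : ℕ) (hm : m ≤ n) :
    ∑ j ∈ Icc 1 n, (if j ≤ m then (m - j).choose 2 else 0) = m.choose 3 := by
  rw [← Finset.sum_filter]
  have hf : (Icc 1 n).filter (fun j => j ≤ m) = Icc 1 m := by
    ext j; simp only [Finset.mem_filter, Finset.mem_Icc]; omega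
  rw [hf, ← sum_range_choose2 m]
  apply Finset.sum_nbij' (fun j => m - j) (fun t => m - t)
  · intro j hj; simp only [Finset.mem_Icc] at hj; simp only [Finset.mem_range]; omega
  · intro t ht; simp only [Finset.mem_range] at ht; simp only [Finset.mem_Icc]; omega
  · intro j hj; simp only [Finset.mem_Icc] at hj; omega
  · intro t ht; simp only [Finset.mem_range] at ht; omega
  · intro j _; rfl

lemma range_split (f : ℕ → ℕ) (n : ℕ) :
    ∑ i ∈ Finset.range (n + 1), f i = f 0 + ∑ i ∈ Icc 1 n, f i := by
  induction n with
  | zero => simp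
  | succ n ih =>
    rw [Finset.sum_range_succ, ih, Finset.sum_Icc_succ_top (by omega)]
    ring

lemma parts_decomp (n : ℕ) (l : Nat.Partition n) (hl : l ∈ binaryPartitions n) :
    ∑ i ∈ Finset.range (n + 1), 2 ^ i * l.parts.count (2 ^ i) = n := by
  classical
  have hsub : l.parts.toFinset ⊆ (Finset.range (n+1)).image (fun i => 2 ^ i) := by
    intro p hp
    rw [Multiset.mem_toFinset] at hp
    obtain ⟨i, rfl⟩ := mem_bp.mp hl p hp
    have hple : 2 ^ i ≤ n := by
      have h := Multiset.le_sum_of_mem hp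
      rwa [l.parts_sum] at h
    have hi : i < n + 1 := by
      have := Nat.lt_two_pow_self (n := i)
      omega
    exact Finset.mem_image.mpr ⟨i, Finset.mem_range.mpr hi, rfl⟩
  have h1 : ∑ i ∈ Finset.range (n+1), 2 ^ i * l.parts.count (2 ^ i)
      = ∑ p ∈ (Finset.range (n+1)).image (fun i => 2 ^ i), p * l.parts.count p := by
    rw [Finset.sum_image]
    intro x _ y _ h
    exact Nat.pow_right_injective le_rfl h
  rw [h1, ← Finset.sum_subset hsub (fun x _ hx => by
      rw [Multiset.count_eq_zero_of_notMem (fun hmem => hx (Multiset.mem_toFinset.mpr hmem)),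
        mul_zero])]
  have h2 := Finset.sum_multiset_count l.parts
  rw [l.parts_sum] at h2
  conv_rhs => rw [h2]
  apply Finset.sum_congr rfl
  intro p _
  rw [smul_eq_mul, mul_comm]

lemma count_ind (n c : ℕ) (hc : c ≤ n) :
    c = ∑ j ∈ Icc 1 n, (if j ≤ c then 1 else 0) := by
  rw [← Finset.sum_filter]
  have hf : (Icc 1 n).filter (fun j => j ≤ c) = Icc 1 c := by
    ext j; simp only [Finset.mem_filter, Finset.mem_Icc]; omega
  rw [hf]
  simp

lemma count_le (n : ℕ) (l : Nat.Partition n) (q : ℕ) (hq : 0 < q) :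
    l.parts.count q ≤ n := by
  have h := count_mul_le_sum l.parts q
  rw [l.parts_sum] at h
  have : l.parts.count q ≤ l.parts.count q * q := Nat.le_mul_of_pos_right _ hq
  omega

open Classical in
lemma beta_eq (n k : ℕ) (hk : 1 ≤ k) (hkn : k ≤ n) :
    beta k = 1 + ∑ i ∈ Icc 1 n, (if 2 ^ i ∣ k then 2 ^ i else 0) := by
  have h1 : beta k = ∑ i ∈ Finset.range (n+1), (if 2 ^ i ∣ k then 2 ^ i else 0) := by
    unfold beta
    rw [← Finset.sum_filter]
    apply Finset.sum_nbij' (fun d => Nat.log 2 d) (fun i => 2 ^ i)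
    · intro d hd
      simp only [Finset.mem_filter, Nat.mem_divisors] at hd
      obtain ⟨⟨hdvd, hk0⟩, i, rfl⟩ := hd
      rw [Nat.log_pow (by norm_num)]
      simp only [Finset.mem_filter, Finset.mem_range]
      have hle : 2 ^ i ≤ k := Nat.le_of_dvd (by omega) hdvd
      have := Nat.lt_two_pow_self (n := i)
      exact ⟨by omega, hdvd⟩
    · intro i hi
      simp only [Finset.mem_filter, Finset.mem_range] at hi
      simp only [Finset.mem_filter, Nat.mem_divisors]
      exact ⟨⟨hi.2, by omega⟩, i, rfl⟩
    · intro d hd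
      simp only [Finset.mem_filter, Nat.mem_divisors] at hd
      obtain ⟨⟨hdvd, hk0⟩, i, rfl⟩ := hd
      rw [Nat.log_pow (by norm_num)]
    · intro i hi
      rw [Nat.log_pow (by norm_num)]
    · intro d hd
      simp only [Finset.mem_filter, Nat.mem_divisors] at hd
      obtain ⟨⟨hdvd, hk0⟩, i, rfl⟩ := hd
      rw [Nat.log_pow (by norm_num)]
  rw [h1, range_split (fun i => if 2 ^ i ∣ k then 2 ^ i else 0) n]
  norm_num

lemma sw_i (n i : ℕ) :
    ∑ k ∈ (Icc 1 n).filter (fun k => 2 ^ i ∣ k), 2 ^ i * a (n - k)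
      = ∑ j ∈ Icc 1 n, 2 ^ i * a (n - j * 2 ^ i) := by
  symm
  rw [← Finset.sum_filter_of_ne (p := fun j => j * 2 ^ i ≤ n) (by
    intro j _ hfne
    by_contra hgt
    push_neg at hgt
    apply hfne
    have h0 : n - j * 2 ^ i = 0 := by omega
    rw [h0, a_zero, mul_zero])]
  apply Finset.sum_nbij' (fun j => j * 2 ^ i) (fun k => k / 2 ^ i)
  · intro j hj
    simp only [Finset.mem_filter, Finset.mem_Icc] at hj ⊢
    have h1 : 1 ≤ 2 ^ i := Nat.one_le_two_pow
    refine ⟨⟨?_, hj.2⟩, dvd_mul_left _ _⟩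
    have := hj.1.1
    nlinarith
  · intro kk hkk
    simp only [Finset.mem_filter, Finset.mem_Icc] at hkk ⊢
    obtain ⟨⟨hk1, hk2⟩, hdvd⟩ := hkk
    have h1 : 1 ≤ 2 ^ i := Nat.one_le_two_pow
    have hmul : kk / 2 ^ i * 2 ^ i = kk := Nat.div_mul_cancel hdvd
    have hds := Nat.div_le_self kk (2 ^ i)
    refine ⟨⟨?_, by omega⟩, by omega⟩
    rcases Nat.eq_zero_or_pos (kk / 2 ^ i) with h | h
    · rw [h] at hmul; omega
    · omega
  · intro j _
    exact Nat.mul_div_cancel _ (by positivity)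
  · intro kk hkk
    simp only [Finset.mem_filter] at hkk
    exact Nat.div_mul_cancel hkk.2
  · intro j _; rfl

lemma main_nat (n : ℕ) :
    n * a n = (∑ k ∈ Icc 1 n, (beta k + 2) * a (n - k)) + 2 * a n := by
  classical
  have L1 : n * a n
      = (∑ l ∈ binaryPartitions n, l.parts.count 1 * (l.parts.count 1).choose 2)
        + ∑ i ∈ Icc 1 n, ∑ l ∈ binaryPartitions n,
            2 ^ i * l.parts.count (2 ^ i) * (l.parts.count 1).choose 2 := by
    rw [a, Finset.mul_sum]
    have e1 : ∀ l ∈ binaryPartitions n,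
        n * (l.parts.count 1).choose 2
        = l.parts.count 1 * (l.parts.count 1).choose 2
          + ∑ i ∈ Icc 1 n, 2 ^ i * l.parts.count (2 ^ i) * (l.parts.count 1).choose 2 := by
      intro l hl
      have hd := parts_decomp n l hl
      have h' : n * (l.parts.count 1).choose 2
          = (∑ i ∈ Finset.range (n + 1), 2 ^ i * l.parts.count (2 ^ i))
            * (l.parts.count 1).choose 2 :=
        (congrArg (fun x => x * (l.parts.count 1).choose 2) hd).symm
      rw [h', range_split (fun i => 2 ^ i * l.parts.count (2 ^ i)) n]
      rw [add_mul, Finset.sum_mul]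
      norm_num
    rw [Finset.sum_congr rfl e1, Finset.sum_add_distrib, Finset.sum_comm]
  have T2 : ∀ i ∈ Icc 1 n, ∑ l ∈ binaryPartitions n,
      2 ^ i * l.parts.count (2 ^ i) * (l.parts.count 1).choose 2
      = ∑ j ∈ Icc 1 n, 2 ^ i * a (n - j * 2 ^ i) := by
    intro i hi
    rw [Finset.mem_Icc] at hi
    have e2 : ∀ l ∈ binaryPartitions n,
        2 ^ i * l.parts.count (2 ^ i) * (l.parts.count 1).choose 2
        = ∑ j ∈ Icc 1 n, (if j ≤ l.parts.count (2 ^ i)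
            then 2 ^ i * (l.parts.count 1).choose 2 else 0) := by
      intro l hl
      conv_lhs => rw [count_ind n (l.parts.count (2 ^ i)) (count_le n l _ (by positivity))]
      rw [Finset.mul_sum, Finset.sum_mul]
      apply Finset.sum_congr rfl
      intro j _
      split_ifs <;> ring
    rw [Finset.sum_congr rfl e2, Finset.sum_comm]
    apply Finset.sum_congr rfl
    intro j hj
    rw [Finset.mem_Icc] at hj
    rw [← Finset.sum_filter, ← Finset.mul_sum, key1 n i j hi.1 hj.1]
  have T1 : ∑ l ∈ binaryPartitions n, l.parts.count 1 * (l.parts.count 1).choose 2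
      = 3 * (∑ j ∈ Icc 1 n, a (n - j)) + 2 * a n := by
    have e3 : ∀ l ∈ binaryPartitions n,
        l.parts.count 1 * (l.parts.count 1).choose 2
        = 3 * (l.parts.count 1).choose 3 + 2 * (l.parts.count 1).choose 2 :=
      fun l _ => choose_id _
    rw [Finset.sum_congr rfl e3, Finset.sum_add_distrib, ← Finset.mul_sum, ← Finset.mul_sum]
    congr 1
    congr 1
    have e4 : ∀ l ∈ binaryPartitions n, (l.parts.count 1).choose 3
        = ∑ j ∈ Icc 1 n, (if j ≤ l.parts.count 1 then (l.parts.count 1 - j).choose 2 else 0) :=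
      fun l _ => (hockey n _ (count_le n l 1 one_pos)).symm
    rw [Finset.sum_congr rfl e4, Finset.sum_comm]
    apply Finset.sum_congr rfl
    intro j hj
    rw [Finset.mem_Icc] at hj
    rw [← Finset.sum_filter, key0 n j hj.1 hj.2]
  have R : ∑ k ∈ Icc 1 n, (beta k + 2) * a (n - k)
      = 3 * (∑ k ∈ Icc 1 n, a (n - k))
        + ∑ k ∈ Icc 1 n, ∑ i ∈ Icc 1 n, (if 2 ^ i ∣ k then 2 ^ i * a (n - k) else 0) := by
    have e5 : ∀ k ∈ Icc 1 n, (beta k + 2) * a (n - k)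
        = 3 * a (n - k) + ∑ i ∈ Icc 1 n, (if 2 ^ i ∣ k then 2 ^ i * a (n - k) else 0) := by
      intro k hk
      rw [Finset.mem_Icc] at hk
      rw [beta_eq n k hk.1 hk.2, add_mul, add_mul, one_mul, Finset.sum_mul]
      have e6 : ∀ i ∈ Icc 1 n, (if 2 ^ i ∣ k then 2 ^ i else 0) * a (n - k)
          = (if 2 ^ i ∣ k then 2 ^ i * a (n - k) else 0) := by
        intro i _; split_ifs <;> ring
      rw [Finset.sum_congr rfl e6]
      ring
    rw [Finset.sum_congr rfl e5, Finset.sum_add_distrib, ← Finset.mul_sum]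
  have SW : ∑ k ∈ Icc 1 n, ∑ i ∈ Icc 1 n, (if 2 ^ i ∣ k then 2 ^ i * a (n - k) else 0)
      = ∑ i ∈ Icc 1 n, ∑ j ∈ Icc 1 n, 2 ^ i * a (n - j * 2 ^ i) := by
    rw [Finset.sum_comm]
    apply Finset.sum_congr rfl
    intro i _
    rw [← Finset.sum_filter]
    exact sw_i n i
  rw [L1, Finset.sum_congr rfl T2, T1, R, SW]
  omega

theorem stmt_4 (n : ℕ) :
    ((n : ℤ) - 2) * (a n : ℤ) =
      ∑ k ∈ Finset.Icc 1 n, ((beta k : ℤ) + 2) * (a (n - k) : ℤ) := by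
  have h := main_nat n
  have h2 : ((n : ℤ)) * (a n : ℤ)
      = (∑ k ∈ Finset.Icc 1 n, ((beta k : ℤ) + 2) * (a (n - k) : ℤ)) + 2 * (a n : ℤ) := by
    exact_mod_cast congrArg (Nat.cast (R := ℤ)) h
  linarith
end

section
/- For all n ≥ 0, the forward difference a_{n+1} - a_n equals a_{⌊(n+2)/2⌋} + a_{⌈(n+2)/2⌉}. -/
/-! ### Auxiliary definitions -/

noncomputable def bb (n : ℕ) : ℕ := (binaryPartitions n).card

noncomputable def SS (n : ℕ) : ℕ := ∑ l ∈ binaryPartitions n, l.parts.count 1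

/-- Add a part `1` to a partition. -/
def addOne {n : ℕ} (μ : Nat.Partition n) : Nat.Partition (n + 1) where
  parts := 1 ::ₘ μ.parts
  parts_pos := by
    intro i hi
    rcases Multiset.mem_cons.1 hi with h | h
    · omega
    · exact μ.parts_pos h
  parts_sum := by simp [μ.parts_sum, add_comm]

/-- Remove a part `1` from a partition (junk value if there is none). -/
noncomputable def removeOne {n : ℕ} (l : Nat.Partition (n + 1)) : Nat.Partition n :=
  if h : (1 : ℕ) ∈ l.parts then
    { parts := l.parts.erase 1
      parts_pos := fun hi => l.parts_pos (Multiset.mem_of_mem_erase hi)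
      parts_sum := by
        have h2 := l.parts_sum
        rw [← Multiset.cons_erase h, Multiset.sum_cons] at h2
        omega }
  else
    { parts := Multiset.replicate n 1
      parts_pos := fun hi => by
        rw [Multiset.eq_of_mem_replicate hi]; exact Nat.one_pos
      parts_sum := by simp }

/-- The key splitting identity: sums over binary partitions of `n+1` of a function of the
multiplicity of `1` split into the `1`-free part and a sum over binary partitions of `n`. -/
lemma sum_split {M : Type*} [AddCommMonoid M] (n : ℕ) (f : ℕ → M) :
    ∑ l ∈ binaryPartitions (n + 1), f (l.parts.count 1)
      = (∑ _l ∈ (binaryPartitions (n + 1)).filter (fun l => (1 : ℕ) ∉ l.parts), f 0)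
        + ∑ l ∈ binaryPartitions n, f (l.parts.count 1 + 1) := by
  classical
  rw [← Finset.sum_filter_add_sum_filter_not (binaryPartitions (n + 1))
      (fun l => (1 : ℕ) ∉ l.parts)]
  congr 1
  · refine Finset.sum_congr rfl fun l hl => ?_
    rw [Finset.mem_filter] at hl
    rw [Multiset.count_eq_zero.2 hl.2]
  · refine Finset.sum_nbij' removeOne addOne ?_ ?_ ?_ ?_ ?_
    · intro l hl
      rw [Finset.mem_filter, mem_binaryPartitions] at hl
      obtain ⟨hl1, hl2⟩ := hl
      rw [not_not] at hl2
      rw [mem_binaryPartitions, removeOne, dif_pos hl2]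
      intro p hp
      exact hl1 p (Multiset.mem_of_mem_erase hp)
    · intro μ hμ
      rw [mem_binaryPartitions] at hμ
      rw [Finset.mem_filter, mem_binaryPartitions]
      constructor
      · intro p hp
        rcases Multiset.mem_cons.1 hp with h | h
        · exact ⟨0, by simp [h]⟩
        · exact hμ p h
      · rw [not_not]
        exact Multiset.mem_cons_self 1 μ.parts
    · intro l hl
      rw [Finset.mem_filter, not_not] at hl
      ext1
      rw [addOne, removeOne, dif_pos hl.2]
      exact Multiset.cons_erase hl.2
    · intro μ hμ
      ext1
      have h1 : (1 : ℕ) ∈ (addOne μ).parts := Multiset.mem_cons_self 1 μ.parts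
      rw [removeOne, dif_pos h1]
      show ((1 : ℕ) ::ₘ μ.parts).erase 1 = μ.parts
      exact Multiset.erase_cons_head 1 μ.parts
    · intro l hl
      rw [Finset.mem_filter, not_not] at hl
      have h2 : (removeOne l).parts = l.parts.erase 1 := by
        rw [removeOne, dif_pos hl.2]
      rw [h2, Multiset.count_erase_self]
      have : 1 ≤ l.parts.count 1 := Multiset.one_le_count_iff_mem.2 hl.2
      congr 1
      omega

/-- For odd total, every binary partition contains a part `1`. -/
lemma filter_noOne_odd (k : ℕ) :
    (binaryPartitions (2 * k + 1)).filter (fun l => (1 : ℕ) ∉ l.parts) = ∅ := by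
  classical
  rw [Finset.filter_eq_empty_iff]
  intro l hl h1
  rw [mem_binaryPartitions] at hl
  have hdvd : 2 ∣ l.parts.sum := by
    refine Multiset.dvd_sum fun p hp => ?_
    obtain ⟨i, rfl⟩ := hl p hp
    rcases Nat.eq_zero_or_pos i with h | h
    · subst h; simp at hp; exact absurd hp h1
    · exact dvd_pow_self 2 h.ne'
  rw [l.parts_sum] at hdvd
  omega

/-- Doubling is a bijection from binary partitions of `k` to `1`-free binary
partitions of `2k`. -/
lemma card_noOne_even (k : ℕ) :
    ((binaryPartitions (2 * k)).filter (fun l => (1 : ℕ) ∉ l.parts)).card = bb k := by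
  classical
  rw [bb]
  symm
  refine Finset.card_bij
    (fun μ _ => (⟨μ.parts.map (fun p => 2 * p),
      fun hi => by
        obtain ⟨p, hp, rfl⟩ := Multiset.mem_map.1 hi
        have := μ.parts_pos hp; omega,
      by rw [Multiset.sum_map_mul_left, Multiset.map_id', μ.parts_sum]⟩ : Nat.Partition (2 * k)))
    ?_ ?_ ?_
  · intro μ hμ
    rw [mem_binaryPartitions] at hμ
    rw [Finset.mem_filter, mem_binaryPartitions]
    constructor
    · intro p hp
      obtain ⟨q, hq, rfl⟩ := Multiset.mem_map.1 hp
      obtain ⟨i, rfl⟩ := hμ q hq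
      exact ⟨i + 1, by ring⟩
    · intro h
      obtain ⟨q, _, hq2⟩ := Multiset.mem_map.1 h
      omega
  · intro μ₁ h₁ μ₂ h₂ h
    have := congrArg Nat.Partition.parts h
    simp only at this
    ext1
    exact Multiset.map_injective (fun x y hxy => by omega) this
  · intro l hl
    rw [Finset.mem_filter, mem_binaryPartitions] at hl
    obtain ⟨hl1, hl2⟩ := hl
    have heven : ∀ p ∈ l.parts, 2 * (p / 2) = p := by
      intro p hp
      obtain ⟨i, rfl⟩ := hl1 p hp
      rcases Nat.eq_zero_or_pos i with h | h
      · subst h; simp at hp; exact absurd hp hl2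
      · obtain ⟨j, rfl⟩ : ∃ j, i = j + 1 := ⟨i - 1, by omega⟩
        rw [pow_succ']
        omega
    have hmap : (l.parts.map (fun p => p / 2)).map (fun p => 2 * p) = l.parts := by
      rw [Multiset.map_map]
      calc l.parts.map ((fun p => 2 * p) ∘ (fun p => p / 2))
          = l.parts.map id := Multiset.map_congr rfl (fun p hp => heven p hp)
        _ = l.parts := Multiset.map_id l.parts
    have hsum : (l.parts.map (fun p => p / 2)).sum = k := by
      have : ((l.parts.map (fun p => p / 2)).map (fun p => 2 * p)).sum = 2 * k := by
        rw [hmap, l.parts_sum]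
      rw [Multiset.sum_map_mul_left, Multiset.map_id'] at this
      omega
    refine ⟨⟨l.parts.map (fun p => p / 2),
      fun hi => by
        obtain ⟨p, hp, rfl⟩ := Multiset.mem_map.1 hi
        obtain ⟨i, hie⟩ := hl1 p hp
        have h1 : p ≠ 1 := fun h => hl2 (h ▸ hp)
        have := l.parts_pos hp
        have := heven p hp
        omega,
      hsum⟩, ?_, ?_⟩
    · rw [mem_binaryPartitions]
      intro p hp
      obtain ⟨q, hq, rfl⟩ := Multiset.mem_map.1 hp
      obtain ⟨i, rfl⟩ := hl1 q hq
      rcases Nat.eq_zero_or_pos i with h | h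
      · subst h; simp at hq; exact absurd hq hl2
      · obtain ⟨j, rfl⟩ : ∃ j, i = j + 1 := ⟨i - 1, by omega⟩
        exact ⟨j, by rw [pow_succ']; omega⟩
    · ext1
      exact hmap

lemma a_succ (n : ℕ) : a (n + 1) = a n + SS n := by
  classical
  have h := sum_split n (fun c => Nat.choose c 2)
  rw [a, h]
  simp only [show Nat.choose 0 2 = 0 from rfl, Finset.sum_const_zero, zero_add]
  rw [a, SS, ← Finset.sum_add_distrib]
  refine Finset.sum_congr rfl fun l _ => ?_
  rw [Nat.choose_succ_succ, Nat.choose_one_right, add_comm]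

lemma SS_succ (n : ℕ) : SS (n + 1) = SS n + bb n := by
  classical
  have h := sum_split n (fun c => c)
  rw [SS, h]
  simp only [Finset.sum_const_zero, zero_add]
  rw [SS, bb, Finset.sum_add_distrib, Finset.sum_const, smul_eq_mul, mul_one]

lemma bb_succ (n : ℕ) :
    bb (n + 1) = ((binaryPartitions (n + 1)).filter (fun l => (1 : ℕ) ∉ l.parts)).card + bb n := by
  classical
  have h := sum_split n (fun _ => (1 : ℕ))
  rw [bb, Finset.card_eq_sum_ones, h, bb, Finset.card_eq_sum_ones, Finset.card_eq_sum_ones]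

lemma bb_odd (k : ℕ) : bb (2 * k + 1) = bb (2 * k) := by
  have h := bb_succ (2 * k)
  rw [filter_noOne_odd k] at h
  simpa using h

lemma bb_even_succ (k : ℕ) : bb (2 * k + 2) = bb (k + 1) + bb (2 * k + 1) := by
  have h := bb_succ (2 * k + 1)
  rw [show 2 * k + 1 + 1 = 2 * (k + 1) from by ring] at h
  rw [card_noOne_even (k + 1)] at h
  rw [show 2 * k + 2 = 2 * (k + 1) from by ring]
  exact h

lemma bb_zero : bb 0 = 1 := by
  classical
  rw [bb, Finset.card_eq_one]
  have hp : ∀ l : Nat.Partition 0, l.parts = 0 := by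
    intro l
    have := l.parts_sum
    by_contra h
    obtain ⟨p, hp⟩ := Multiset.exists_mem_of_ne_zero h
    have h1 := l.parts_pos hp
    have h2 := Multiset.single_le_sum (fun x hx => Nat.zero_le x) p hp
    omega
  refine ⟨⟨0, by simp, by simp⟩, ?_⟩
  ext l
  simp only [Finset.mem_singleton, mem_binaryPartitions]
  constructor
  · intro _
    ext1
    rw [hp l]
  · intro h
    subst h
    intro p hp
    simp at hp
  
lemma SS_zero : SS 0 = 0 := by
  classical
  rw [SS]
  refine Finset.sum_eq_zero fun l _ => ?_
  have := l.parts_sum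
  have : l.parts = 0 := by
    by_contra h
    obtain ⟨p, hp⟩ := Multiset.exists_mem_of_ne_zero h
    have h1 := l.parts_pos hp
    have h2 := Multiset.single_le_sum (fun x hx => Nat.zero_le x) p hp
    omega
  rw [this]
  simp

lemma bb_even (k : ℕ) : bb (2 * k) = SS k + bb k := by
  induction k with
  | zero => simp [bb_zero, SS_zero]
  | succ k ih =>
    have h1 : bb (2 * (k + 1)) = bb (k + 1) + bb (2 * k + 1) := by
      rw [show 2 * (k + 1) = 2 * k + 2 from by ring]
      exact bb_even_succ k
    rw [h1, bb_odd, ih, SS_succ]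
    omega

lemma a_one : a 1 = 0 := by
  classical
  rw [a]
  refine Finset.sum_eq_zero fun l _ => ?_
  have hs := l.parts_sum
  have hcount : l.parts.count 1 ≤ 1 := by
    have h1 : l.parts.count 1 * 1 ≤ l.parts.sum := by
      rw [mul_one]
      calc l.parts.count 1 = (l.parts.filter (· = 1)).card := by
            rw [Multiset.count_eq_card_filter_eq]
            congr 1
            ext x
            simp [eq_comm]
        _ ≤ l.parts.card := Multiset.card_le_card (Multiset.filter_le _ _)
        _ ≤ l.parts.sum := by
            simpa using Multiset.card_nsmul_le_sum (fun x hx => l.parts_pos hx)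
    omega
  exact Nat.choose_eq_zero_of_lt (by omega)

lemma SS_eq (n : ℕ) : SS n = a ((n + 2) / 2) + a ((n + 3) / 2) := by
  induction n with
  | zero => simp [SS_zero, a_one]
  | succ n ih =>
    rcases Nat.even_or_odd n with ⟨k, hk⟩ | ⟨k, hk⟩
    · subst hk
      rw [show k + k = 2 * k from by ring] at ih ⊢
      rw [show (2 * k + 2) / 2 = k + 1 from by omega,
          show (2 * k + 3) / 2 = k + 1 from by omega] at ih
      rw [show (2 * k + 1 + 2) / 2 = k + 1 from by omega,
          show (2 * k + 1 + 3) / 2 = k + 2 from by omega]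
      rw [SS_succ, ih, a_succ (k + 1), SS_succ, ← bb_even]
      omega
    · subst hk
      rw [show (2 * k + 1 + 2) / 2 = k + 1 from by omega,
          show (2 * k + 1 + 3) / 2 = k + 2 from by omega] at ih
      rw [show (2 * k + 1 + 1 + 2) / 2 = k + 2 from by omega,
          show (2 * k + 1 + 1 + 3) / 2 = k + 2 from by omega]
      rw [SS_succ, ih, a_succ (k + 1), SS_succ, ← bb_even, ← bb_odd]
      omega

theorem stmt_6 (n : ℕ) :
    (a (n + 1) : ℤ) - (a n : ℤ) = (a ((n + 2) / 2) : ℤ) + (a ((n + 3) / 2) : ℤ) := by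
  have h1 := a_succ n
  have h2 := SS_eq n
  omega
end

section
/- For every integer d ≥ 2 and every n, the map pre_2 is injective on the set of d-ary partitions of n with at least two parts: if λ and μ are d-ary partitions of n, each with at least two parts, and pre_2(λ) = pre_2(μ), then λ = μ. -/
lemma sum_sq (s : Multiset ℕ) :
    s.sum ^ 2 = (s.map (· ^ 2)).sum + 2 * (pre2 s).sum := by
  induction s using Multiset.induction with
  | empty => simp [pre2, Multiset.powersetCard_zero_right 1]
  | cons a s ih =>
    rw [pre2_cons]
    have hmul : (s.map (a * ·)).sum = a * s.sum := by
      have := Multiset.sum_map_mul_left (s := s) (a := a) (f := id)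
      simpa using this
    simp only [Multiset.sum_cons, Multiset.map_cons, Multiset.sum_add, hmul]
    ring_nf
    ring_nf at ih
    omega

lemma pre2_map_pow (t : ℕ) (s : Multiset ℕ) :
    pre2 (s.map (· ^ t)) = (pre2 s).map (· ^ t) := by
  simp only [pre2, Multiset.powersetCard_map, Multiset.map_map]
  apply Multiset.map_congr rfl
  intro x _
  simp [Multiset.prod_map_pow]

lemma pow_sum_step {S T : Multiset ℕ} (h : pre2 S = pre2 T) (t : ℕ)
    (ht : (S.map (· ^ t)).sum = (T.map (· ^ t)).sum) :
    (S.map (· ^ (t * 2))).sum = (T.map (· ^ (t * 2))).sum := by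
  have hS := sum_sq (S.map (· ^ t))
  have hT := sum_sq (T.map (· ^ t))
  rw [pre2_map_pow, h, ← pre2_map_pow] at hS
  rw [ht] at hS
  rw [hS] at hT
  have h2 : ((S.map (· ^ t)).map (· ^ 2)).sum = ((T.map (· ^ t)).map (· ^ 2)).sum := by
    omega
  simpa [Multiset.map_map, Function.comp_def, ← pow_mul] using h2

lemma pow_sums_eq {S T : Multiset ℕ} (h : pre2 S = pre2 T) (hsum : S.sum = T.sum) :
    ∀ k, (S.map (· ^ (2 ^ k))).sum = (T.map (· ^ (2 ^ k))).sum := by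
  intro k
  induction k with
  | zero => simpa using hsum
  | succ k ih =>
    have := pow_sum_step h (2 ^ k) ih
    rwa [pow_succ]

lemma bernoulli_nat (N n : ℕ) : N ^ (n + 1) + (n + 1) * N ^ n ≤ (N + 1) ^ (n + 1) := by
  induction n with
  | zero => simp
  | succ n ih =>
    have key : (N + 1) * (N ^ (n + 1) + (n + 1) * N ^ n) =
        N ^ (n + 2) + (n + 2) * N ^ (n + 1) + (n + 1) * N ^ n := by ring
    calc N ^ (n + 2) + (n + 2) * N ^ (n + 1)
        ≤ (N + 1) * (N ^ (n + 1) + (n + 1) * N ^ n) := by rw [key]; exact Nat.le_add_right _ _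
      _ ≤ (N + 1) * (N + 1) ^ (n + 1) := Nat.mul_le_mul_left _ ih
      _ = (N + 1) ^ (n + 2) := by ring

lemma exists_pow_gt (c N M : ℕ) (hN : 1 ≤ N) (hMN : N < M) :
    ∀ e, c * N + 1 ≤ e → c * N ^ e < M ^ e := by
  intro e he
  induction e with
  | zero => omega
  | succ e ih =>
    rcases Nat.lt_or_ge (c * N) e with h' | h'
    · -- e ≥ c*N+1, use ih then multiply
      have hce := ih (by omega)
      calc c * N ^ (e + 1) = (c * N ^ e) * N := by ring
        _ < M ^ e * N := (Nat.mul_lt_mul_right hN).mpr hce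
        _ ≤ M ^ e * M := Nat.mul_le_mul_left _ (le_of_lt hMN)
        _ = M ^ (e + 1) := by ring
    · -- e = c * N exactly
      have heq : c * N = e := by omega
      have hb := bernoulli_nat N e
      have hM : (N + 1) ^ (e + 1) ≤ M ^ (e + 1) :=
        Nat.pow_le_pow_left (by omega) _
      have hpos : 0 < N ^ e := Nat.pow_pos hN
      calc c * N ^ (e + 1) = (c * N) * N ^ e := by ring
        _ < (e + 1) * N ^ e := (Nat.mul_lt_mul_right hpos).mpr (by omega)
        _ ≤ N ^ (e + 1) + (e + 1) * N ^ e := Nat.le_add_left _ _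
        _ ≤ (N + 1) ^ (e + 1) := hb
        _ ≤ M ^ (e + 1) := hM

lemma max_not_lt (S T : Multiset ℕ) (M N : ℕ) (hMS : M ∈ S)
    (hNmax : ∀ t ∈ T, t ≤ N) (hN : 1 ≤ N) (hNM : N < M)
    (hpow : ∀ k, (S.map (· ^ 2 ^ k)).sum = (T.map (· ^ 2 ^ k)).sum) : False := by
  set c := Multiset.card T with hc
  have hke : c * N + 1 ≤ 2 ^ (c * N) := Nat.succ_le_of_lt Nat.lt_two_pow_self
  have hlt : c * N ^ 2 ^ (c * N) < M ^ 2 ^ (c * N) := exists_pow_gt c N M hN hNM _ hke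
  have hMe : M ^ 2 ^ (c * N) ≤ (S.map (· ^ 2 ^ (c * N))).sum := by
    apply Multiset.single_le_sum (fun x _ => Nat.zero_le x)
    exact Multiset.mem_map_of_mem _ hMS
  have hTe : (T.map (· ^ 2 ^ (c * N))).sum ≤ c * N ^ 2 ^ (c * N) := by
    have h2 := Multiset.sum_le_card_nsmul (T.map (· ^ 2 ^ (c * N))) (N ^ 2 ^ (c * N)) ?_
    · simpa [← hc, smul_eq_mul] using h2
    · intro x hx
      obtain ⟨t, ht, rfl⟩ := Multiset.mem_map.mp hx
      exact Nat.pow_le_pow_left (hNmax t ht) _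
  have hpe := hpow (c * N)
  omega

lemma multiset_eq_of_pow (c : ℕ) : ∀ S T : Multiset ℕ, Multiset.card S = c →
    (∀ s ∈ S, 0 < s) → (∀ t ∈ T, 0 < t) →
    (∀ k, (S.map (· ^ 2 ^ k)).sum = (T.map (· ^ 2 ^ k)).sum) → S = T := by
  induction c with
  | zero =>
    intro S T hcard hS hT hpow
    have hS0 : S = 0 := Multiset.card_eq_zero.mp hcard
    subst hS0
    have h0 := hpow 0
    simp at h0
    rcases eq_or_ne T 0 with h | h
    · exact h.symm
    · exfalso
      obtain ⟨t, ht⟩ := Multiset.exists_mem_of_ne_zero h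
      have h1 : t ≤ T.sum := Multiset.single_le_sum (fun x _ => Nat.zero_le x) t ht
      have h2 : 0 < t := hT t ht
      omega
  | succ c ih =>
    intro S T hcard hS hT hpow
    have hS0 : S ≠ 0 := by
      intro h; rw [h] at hcard; simp at hcard
    have hT0 : T ≠ 0 := by
      intro h
      subst h
      have h0 := hpow 0
      simp at h0
      obtain ⟨s, hs⟩ := Multiset.exists_mem_of_ne_zero hS0
      have h1 : s ≤ S.sum := Multiset.single_le_sum (fun x _ => Nat.zero_le x) s hs
      have h2 : 0 < s := hS s hs
      omega
    have hSfin : S.toFinset.Nonempty := by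
      obtain ⟨s, hs⟩ := Multiset.exists_mem_of_ne_zero hS0
      exact ⟨s, Multiset.mem_toFinset.mpr hs⟩
    have hTfin : T.toFinset.Nonempty := by
      obtain ⟨t, ht⟩ := Multiset.exists_mem_of_ne_zero hT0
      exact ⟨t, Multiset.mem_toFinset.mpr ht⟩
    set M := S.toFinset.max' hSfin with hM
    set N := T.toFinset.max' hTfin with hN
    have hMS : M ∈ S := Multiset.mem_toFinset.mp (S.toFinset.max'_mem hSfin)
    have hNT : N ∈ T := Multiset.mem_toFinset.mp (T.toFinset.max'_mem hTfin)
    have hMmax : ∀ s ∈ S, s ≤ M := fun s hs =>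
      S.toFinset.le_max' s (Multiset.mem_toFinset.mpr hs)
    have hNmax : ∀ t ∈ T, t ≤ N := fun t ht =>
      T.toFinset.le_max' t (Multiset.mem_toFinset.mpr ht)
    have hMN : M = N := by
      by_contra hne
      rcases Nat.lt_or_ge N M with h | h
      · exact max_not_lt S T M N hMS hNmax (hT N hNT) h hpow
      · have h' : M < N := by omega
        exact max_not_lt T S N M hNT hMmax (hS M hMS) h' (fun k => (hpow k).symm)
    have hMT : M ∈ T := hMN ▸ hNT
    have hScons : M ::ₘ S.erase M = S := Multiset.cons_erase hMS
    have hTcons : M ::ₘ T.erase M = T := Multiset.cons_erase hMT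
    have hpow' : ∀ k, ((S.erase M).map (· ^ 2 ^ k)).sum = ((T.erase M).map (· ^ 2 ^ k)).sum := by
      intro k
      have := hpow k
      rw [← hScons, ← hTcons] at this
      simp only [Multiset.map_cons, Multiset.sum_cons] at this
      omega
    have hcard' : Multiset.card (S.erase M) = c := by
      have := Multiset.card_erase_of_mem hMS
      rw [this, hcard]
      rfl
    have heq : S.erase M = T.erase M :=
      ih _ _ hcard' (fun s hs => hS s (Multiset.mem_of_mem_erase hs))
        (fun t ht => hT t (Multiset.mem_of_mem_erase ht)) hpow'
    rw [← hScons, ← hTcons, heq]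

theorem stmt_14 (d : ℕ) (hd : 2 ≤ d) (n : ℕ) (P Q : Nat.Partition n)
    (hPd : ∀ p ∈ P.parts, ∃ i : ℕ, p = d ^ i)
    (hQd : ∀ p ∈ Q.parts, ∃ i : ℕ, p = d ^ i)
    (hP2 : 2 ≤ Multiset.card P.parts) (hQ2 : 2 ≤ Multiset.card Q.parts)
    (h : pre2 P.parts = pre2 Q.parts) : P = Q := by
  have hsum : P.parts.sum = Q.parts.sum := by
    rw [P.parts_sum, Q.parts_sum]
  have hpow := pow_sums_eq h hsum
  have heq : P.parts = Q.parts :=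
    multiset_eq_of_pow (Multiset.card P.parts) P.parts Q.parts rfl
      (fun s hs => P.parts_pos hs) (fun t ht => Q.parts_pos ht) hpow
  exact Nat.Partition.ext heq
end

section
/- For every integer d ≥ 2 and all n ≥ 0, a_n(d) = Σ_{i=0}^{⌊n/d⌋} C(n - d·i, 2)·|P(i, d)|, where C(m,2) = m(m-1)/2. -/
open Classical in
/-- The finset of `d`-ary partitions of `n`: partitions all of whose parts are powers of `d`. -/
noncomputable def daryPartitions (d n : ℕ) : Finset (Nat.Partition n) :=
  Finset.univ.filter fun l => ∀ p ∈ l.parts, ∃ i : ℕ, p = d ^ i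

/-- `aD d n = m₁(ImP₂(n, d))`: the total number of parts equal to 1 in the image of `pre2`
on `d`-ary partitions of `n` with at least two parts; by injectivity this equals
`∑_{λ ∈ P(n,d)} C(m₁(λ), 2)`. -/
noncomputable def aD (d n : ℕ) : ℕ :=
  ∑ l ∈ daryPartitions d n, Nat.choose (l.parts.count 1) 2

lemma mem_dary {d n : ℕ} {l : Nat.Partition n} :
    l ∈ daryPartitions d n ↔ ∀ p ∈ l.parts, ∃ i : ℕ, p = d ^ i := by
  simp [daryPartitions]

lemma sum_map_mul_left' (d : ℕ) (s : Multiset ℕ) :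
    (s.map (fun x => d * x)).sum = d * s.sum := by
  have := Multiset.sum_map_mul_left (a := d) (s := s) (f := id)
  simpa using this

lemma dvd_of_ne_one {d n : ℕ} (hd : 2 ≤ d) {l : Nat.Partition n}
    (hl : l ∈ daryPartitions d n) {p : ℕ} (hp : p ∈ l.parts) (h1 : p ≠ 1) : d ∣ p := by
  obtain ⟨j, rfl⟩ := mem_dary.mp hl p hp
  cases j with
  | zero => simp at h1
  | succ k => exact ⟨d ^ k, (pow_succ' d k)⟩

open Classical in
lemma decomp {n : ℕ} (l : Nat.Partition n) :
    Multiset.replicate (l.parts.count 1) 1 + l.parts.filter (fun p => ¬ p = 1) = l.parts := by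
  rw [← Multiset.filter_eq' l.parts 1]
  exact Multiset.filter_add_not _ _

open Classical in
lemma sum_filter_ne_one {n : ℕ} (l : Nat.Partition n) :
    l.parts.count 1 + (l.parts.filter (fun p => ¬ p = 1)).sum = n := by
  have h := congrArg Multiset.sum (decomp l)
  rw [Multiset.sum_add, Multiset.sum_replicate, smul_eq_mul, mul_one, l.parts_sum] at h
  exact h

theorem stmt_16 (d : ℕ) (hd : 2 ≤ d) (n : ℕ) :
    aD d n = ∑ i ∈ Finset.range (n / d + 1),
      Nat.choose (n - d * i) 2 * (daryPartitions d i).card := by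
  classical
  have hd0 : 0 < d := by omega
  -- key divisibility: for l in daryPartitions d n, d ∣ n - count 1
  have hdvd : ∀ l ∈ daryPartitions d n, d ∣ (n - l.parts.count 1) := by
    intro l hl
    have hsum := sum_filter_ne_one l
    have h1 : d ∣ (l.parts.filter (fun p => ¬ p = 1)).sum := by
      apply Multiset.dvd_sum
      intro x hx
      have hx' := Multiset.mem_filter.mp hx
      exact dvd_of_ne_one hd hl hx'.1 hx'.2
    have h2 : (l.parts.filter (fun p => ¬ p = 1)).sum = n - l.parts.count 1 := by omega
    exact h2 ▸ h1
  have hle : ∀ l : Nat.Partition n, l.parts.count 1 ≤ n := by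
    intro l; have := sum_filter_ne_one l; omega
  have hmaps : ∀ l ∈ daryPartitions d n,
      (n - l.parts.count 1) / d ∈ Finset.range (n / d + 1) := by
    intro l _
    simp only [Finset.mem_range, Nat.lt_succ_iff]
    exact Nat.div_le_div_right (Nat.sub_le _ _)
  rw [aD, ← Finset.sum_fiberwise_of_maps_to hmaps]
  apply Finset.sum_congr rfl
  intro i hi
  have hdi : d * i ≤ n := by
    have hi' : i ≤ n / d := by simpa [Nat.lt_succ_iff] using hi
    calc d * i ≤ d * (n / d) := Nat.mul_le_mul_left d hi'
    _ ≤ n := Nat.mul_div_le n d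
  -- every l in the fiber has count 1 = n - d * i
  have hcount : ∀ l ∈ (daryPartitions d n).filter
      (fun l => (n - l.parts.count 1) / d = i), l.parts.count 1 = n - d * i := by
    intro l hl
    rw [Finset.mem_filter] at hl
    obtain ⟨hl1, hl2⟩ := hl
    have h1 := hdvd l hl1
    have h2 := hle l
    have h3 : n - l.parts.count 1 = d * i := by
      rw [← hl2]; exact (Nat.mul_div_cancel' h1).symm
    omega
  rw [Finset.sum_congr rfl (fun l hl => by rw [hcount l hl]), Finset.sum_const,
    smul_eq_mul, mul_comm]
  congr 1
  -- the bijection between the fiber and daryPartitions d i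
  refine Finset.card_bij'
    (fun l (hl : l ∈ (daryPartitions d n).filter
      (fun l => (n - l.parts.count 1) / d = i)) =>
      (⟨(l.parts.filter (fun p => ¬ p = 1)).map (· / d), by
        intro q hq
        obtain ⟨p, hp, rfl⟩ := Multiset.mem_map.mp hq
        have hp' := Multiset.mem_filter.mp hp
        have hdp := dvd_of_ne_one hd (Finset.mem_filter.mp hl).1 hp'.1 hp'.2
        have hppos := l.parts_pos hp'.1
        exact Nat.div_pos (Nat.le_of_dvd hppos hdp) hd0, by
        -- sum is i
        have hl1 := (Finset.mem_filter.mp hl).1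
        have key : ((l.parts.filter (fun p => ¬ p = 1)).map (· / d)).map
            (fun x => d * x) = l.parts.filter (fun p => ¬ p = 1) := by
          rw [Multiset.map_map]
          conv_rhs => rw [← Multiset.map_id (l.parts.filter (fun p => ¬ p = 1))]
          apply Multiset.map_congr rfl
          intro p hp
          have hp' := Multiset.mem_filter.mp hp
          exact Nat.mul_div_cancel' (dvd_of_ne_one hd hl1 hp'.1 hp'.2)
        have hsumeq : (l.parts.filter (fun p => ¬ p = 1)).sum = d * i := by
          have h1 := hdvd l hl1
          have h2 := hle l
          have h3 := sum_filter_ne_one l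
          have h4 := hcount l hl
          omega
        have := congrArg Multiset.sum key
        rw [sum_map_mul_left', hsumeq] at this
        exact Nat.eq_of_mul_eq_mul_left hd0 this⟩ : Nat.Partition i))
    (fun m (hm : m ∈ daryPartitions d i) =>
      (⟨Multiset.replicate (n - d * i) 1 + m.parts.map (fun x => d * x), by
        intro p hp
        rcases Multiset.mem_add.mp hp with h | h
        · rw [Multiset.eq_of_mem_replicate h]; norm_num
        · obtain ⟨q, hq, rfl⟩ := Multiset.mem_map.mp h
          exact Nat.mul_pos hd0 (m.parts_pos hq), by
        rw [Multiset.sum_add, Multiset.sum_replicate, smul_eq_mul, mul_one,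
          sum_map_mul_left', m.parts_sum]
        omega⟩ : Nat.Partition n)) ?_ ?_ ?_ ?_
  -- forward lands in daryPartitions d i
  · intro l hl
    rw [mem_dary]
    intro q hq
    obtain ⟨p, hp, rfl⟩ := Multiset.mem_map.mp hq
    have hp' := Multiset.mem_filter.mp hp
    obtain ⟨j, rfl⟩ := mem_dary.mp (Finset.mem_filter.mp hl).1 p hp'.1
    cases j with
    | zero => simp at hp'
    | succ k =>
      refine ⟨k, ?_⟩
      rw [pow_succ]
      exact Nat.mul_div_cancel _ hd0
  -- backward lands in the fiber
  · intro m hm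
    have hcnt : (Multiset.replicate (n - d * i) 1 + m.parts.map (fun x => d * x)).count 1
        = n - d * i := by
      rw [Multiset.count_add, Multiset.count_replicate, if_pos rfl,
        Multiset.count_eq_zero.mpr, add_zero]
      intro h
      obtain ⟨q, hq, hq1⟩ := Multiset.mem_map.mp h
      have := m.parts_pos hq
      nlinarith
    rw [Finset.mem_filter]
    constructor
    · rw [mem_dary]
      intro p hp
      rcases Multiset.mem_add.mp hp with h | h
      · exact ⟨0, by rw [Multiset.eq_of_mem_replicate h, pow_zero]⟩
      · obtain ⟨q, hq, rfl⟩ := Multiset.mem_map.mp h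
        obtain ⟨k, rfl⟩ := mem_dary.mp hm q hq
        exact ⟨k + 1, (pow_succ' d k).symm⟩
    · show (n - _) / d = i
      rw [hcnt]
      have : n - (n - d * i) = d * i := by omega
      rw [this, Nat.mul_div_cancel_left _ hd0]
  -- left inverse
  · intro l hl
    apply Nat.Partition.ext
    show Multiset.replicate (n - d * i) 1
      + ((l.parts.filter (fun p => ¬ p = 1)).map (· / d)).map (fun x => d * x)
      = l.parts
    have hl1 := (Finset.mem_filter.mp hl).1
    have key : ((l.parts.filter (fun p => ¬ p = 1)).map (· / d)).map
        (fun x => d * x) = l.parts.filter (fun p => ¬ p = 1) := by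
      rw [Multiset.map_map]
      conv_rhs => rw [← Multiset.map_id (l.parts.filter (fun p => ¬ p = 1))]
      apply Multiset.map_congr rfl
      intro p hp
      have hp' := Multiset.mem_filter.mp hp
      exact Nat.mul_div_cancel' (dvd_of_ne_one hd hl1 hp'.1 hp'.2)
    have hdl := decomp l
    rw [hcount l hl] at hdl
    rw [key]
    exact hdl
  -- right inverse
  · intro m hm
    apply Nat.Partition.ext
    show ((Multiset.replicate (n - d * i) 1 + m.parts.map (fun x => d * x)).filter
      (fun p => ¬ p = 1)).map (· / d) = m.parts
    rw [Multiset.filter_add]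
    rw [Multiset.filter_eq_nil.mpr (fun a ha => by
      rw [Multiset.eq_of_mem_replicate ha]; simp)]
    rw [Multiset.filter_eq_self.mpr (fun a ha => by
      obtain ⟨q, hq, rfl⟩ := Multiset.mem_map.mp ha
      have := m.parts_pos hq
      intro h; nlinarith)]
    rw [zero_add, Multiset.map_map]
    conv_rhs => rw [← Multiset.map_id m.parts]
    apply Multiset.map_congr rfl
    intro q hq
    exact Nat.mul_div_cancel_left q hd0
end
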